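/- Let G be a simple graph on n vertices with m edges and let c = (c_1,…,c_s) be a composition of n. For each i ∈ [s], the variance of M_i(G) under a uniformly random c-coloring equals (c_i^{(3)}(n − c_i)/n^{(4)})·Σ_2(G) − ( [c_i^{(2)}/n^{(2)}]² − c_i^{(4)}/n^{(4)} )·m² + ( c_i^{(2)}/n^{(2)} − 2·c_i^{(3)}/n^{(3)} + c_i^{(4)}/n^{(4)} )·m, where Σ_2(G) is the sum of the squares of the vertex degrees of G and x^{(b)} denotes the falling factorial. -/

import Mathlib

open Finset MeasureTheory Filter
open scoped Classical

/-- The finset of `c`-colorings of the vertex set `Fin n` with `s` colors: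
maps `f : Fin n → Fin s` whose color class of color `i` has exactly `c i` elements. -/
noncomputable def colorings (n s : ℕ) (c : Fin s → ℕ) : Finset (Fin n → Fin s) :=
  Finset.univ.filter fun f => ∀ i, (Finset.univ.filter fun v => f v = i).card = c i

/-- Probability of an event under the uniform measure on the set of `c`-colorings. -/
noncomputable def colProb (n s : ℕ) (c : Fin s → ℕ) (E : (Fin n → Fin s) → Prop) : ℝ :=
  (((colorings n s c).filter fun f => E f).card : ℝ) / ((colorings n s c).card : ℝ)

/-- Expectation of a real statistic under the uniform measure on `c`-colorings. -/
noncomputable def colExp (n s : ℕ) (c : Fin s → ℕ) (Y : (Fin n → Fin s) → ℝ) : ℝ :=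
  (∑ f ∈ colorings n s c, Y f) / ((colorings n s c).card : ℝ)

/-- Variance of a real statistic under the uniform measure on `c`-colorings. -/
noncomputable def colVar (n s : ℕ) (c : Fin s → ℕ) (Y : (Fin n → Fin s) → ℝ) : ℝ :=
  colExp n s c fun f => (Y f - colExp n s c Y) ^ 2

/-- The number of edges of `G`. -/
noncomputable def edgeCount {n : ℕ} (G : SimpleGraph (Fin n)) : ℕ := G.edgeSet.ncard

/-- `M_i(G)(f)`: the number of edges of `G` whose two endpoints both receive color `i`
under the coloring `f`. -/
noncomputable def monoEdges {n s : ℕ} (G : SimpleGraph (Fin n)) (i : Fin s)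
    (f : Fin n → Fin s) : ℕ :=
  {e ∈ G.edgeSet | ∀ v ∈ e, f v = i}.ncard

/-- `M(G)(f) = ∑ i, M_i(G)(f)`: the total number of monochromatic edges. -/
noncomputable def monoTotal {n s : ℕ} (G : SimpleGraph (Fin n)) (f : Fin n → Fin s) : ℕ :=
  ∑ i, monoEdges G i f

/-- `L(G)(f) = m - M(G)(f)`: the number of bichromatic edges. -/
noncomputable def biEdges {n s : ℕ} (G : SimpleGraph (Fin n)) (f : Fin n → Fin s) : ℝ :=
  (edgeCount G : ℝ) - (monoTotal G f : ℝ)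

/-- `Σ₂(G)`: the sum of the squares of the degrees of `G`. -/
noncomputable def sigma2 {n : ℕ} (G : SimpleGraph (Fin n)) : ℕ :=
  ∑ v, ((G.neighborSet v).ncard) ^ 2

/-- `ζ(G) = √(Σ₂(G)) / m`. -/
noncomputable def zeta {n : ℕ} (G : SimpleGraph (Fin n)) : ℝ :=
  Real.sqrt (sigma2 G) / (edgeCount G : ℝ)

lemma card_filter_equiv {α β : Type*} [Fintype α] [Fintype β] (e : α ≃ β) (p : β → Prop)
    [DecidablePred fun a => p (e a)] [DecidablePred p] :
    (Finset.univ.filter fun a => p (e a)).card = (Finset.univ.filter p).card := by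
  classical
  rw [← Finset.card_map e.toEmbedding]
  congr 1
  ext b
  simp only [Finset.mem_map, Finset.mem_filter, Finset.mem_univ, true_and,
    Equiv.coe_toEmbedding]
  constructor
  · rintro ⟨a, ha, rfl⟩; exact ha
  · intro hb; exact ⟨e.symm b, by simpa using hb, by simp⟩

lemma exists_perm_map {n : ℕ} (T T' : Finset (Fin n)) (h : T.card = T'.card) :
    ∃ σ : Equiv.Perm (Fin n), ∀ v, v ∈ T ↔ σ v ∈ T' := by
  classical
  have h2 : Fintype.card {x // ¬ x ∈ T} = Fintype.card {x // ¬ x ∈ T'} := by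
    have := Fintype.card_subtype_compl (fun x : Fin n => x ∈ T)
    have := Fintype.card_subtype_compl (fun x : Fin n => x ∈ T')
    simp_all [Fintype.card_subtype]
  have h1 : Fintype.card {x // x ∈ T} = Fintype.card {x // x ∈ T'} := by
    simp_all [Fintype.card_subtype]
  let e1 : {x // x ∈ T} ≃ {x // x ∈ T'} := Fintype.equivOfCardEq h1
  let e2 : {x // ¬ x ∈ T} ≃ {x // ¬ x ∈ T'} := Fintype.equivOfCardEq h2
  let σ : Equiv.Perm (Fin n) := e1.subtypeCongr e2
  refine ⟨σ, fun v => ?_⟩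
  by_cases hv : v ∈ T
  · have hσv : σ v = (e1 ⟨v, hv⟩ : Fin n) := by
      simp only [σ, Equiv.subtypeCongr, Equiv.trans_apply,
        Equiv.sumCompl_symm_apply_of_pos hv, Equiv.sumCongr_apply, Sum.map_inl,
        Equiv.sumCompl_apply_inl]
    rw [hσv]
    exact iff_of_true hv (e1 ⟨v, hv⟩).2
  · have hσv : σ v = (e2 ⟨v, hv⟩ : Fin n) := by
      simp only [σ, Equiv.subtypeCongr, Equiv.trans_apply,
        Equiv.sumCompl_symm_apply_of_neg hv, Equiv.sumCongr_apply, Sum.map_inr,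
        Equiv.sumCompl_apply_inr]
    rw [hσv]
    exact iff_of_false hv (e2 ⟨v, hv⟩).2

lemma comp_mem_colorings {n s : ℕ} {c : Fin s → ℕ} (σ : Equiv.Perm (Fin n))
    {f : Fin n → Fin s} (hf : f ∈ colorings n s c) : f ∘ σ ∈ colorings n s c := by
  simp only [colorings, Finset.mem_filter, Finset.mem_univ, true_and] at hf ⊢
  intro j
  rw [← hf j]
  exact card_filter_equiv σ (fun v => f v = j)

lemma count_invariant {n s : ℕ} {c : Fin s → ℕ} {i : Fin s} (T T' : Finset (Fin n))
    (h : T.card = T'.card) :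
    ((colorings n s c).filter fun f => ∀ v ∈ T, f v = i).card
      = ((colorings n s c).filter fun f => ∀ v ∈ T', f v = i).card := by
  obtain ⟨σ, hσ⟩ := exists_perm_map T T' h
  apply Finset.card_bij' (fun f _ => f ∘ σ.symm) (fun g _ => g ∘ σ)
  · intro f hf
    simp only [Finset.mem_filter] at hf ⊢
    refine ⟨comp_mem_colorings σ.symm hf.1, fun v hv => ?_⟩
    have : σ.symm v ∈ T := by
      rw [hσ (σ.symm v)]; simpa using hv
    exact hf.2 _ this
  · intro g hg
    simp only [Finset.mem_filter] at hg ⊢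
    refine ⟨comp_mem_colorings σ hg.1, fun v hv => ?_⟩
    exact hg.2 _ ((hσ v).mp hv)
  · intro f _; funext v; simp
  · intro g _; funext v; simp

lemma count_mul_choose {n s : ℕ} {c : Fin s → ℕ} {i : Fin s} (T : Finset (Fin n)) :
    ((colorings n s c).filter fun f => ∀ v ∈ T, f v = i).card * n.choose T.card
      = (colorings n s c).card * (c i).choose T.card := by
  classical
  have key : ∑ T' ∈ (Finset.univ : Finset (Fin n)).powersetCard T.card,
      ((colorings n s c).filter fun f => ∀ v ∈ T', f v = i).card
      = (colorings n s c).card * (c i).choose T.card := by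
    have hrw : ∀ T' : Finset (Fin n),
        ((colorings n s c).filter fun f => ∀ v ∈ T', f v = i).card
          = ∑ f ∈ colorings n s c, if (∀ v ∈ T', f v = i) then 1 else 0 := by
      intro T'; rw [Finset.card_filter]
    simp_rw [hrw]
    rw [Finset.sum_comm]
    have inner : ∀ f ∈ colorings n s c,
        (∑ T' ∈ (Finset.univ : Finset (Fin n)).powersetCard T.card,
          if (∀ v ∈ T', f v = i) then 1 else 0) = (c i).choose T.card := by
      intro f hf
      have hfib : (Finset.univ.filter fun v => f v = i).card = c i := by
        simp only [colorings, Finset.mem_filter, Finset.mem_univ, true_and] at hf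
        exact hf i
      have hfilter : ((Finset.univ : Finset (Fin n)).powersetCard T.card).filter
          (fun T' => ∀ v ∈ T', f v = i)
          = (Finset.univ.filter fun v => f v = i).powersetCard T.card := by
        ext T'
        simp only [Finset.mem_filter, Finset.mem_powersetCard, Finset.subset_univ, true_and]
        constructor
        · rintro ⟨hc, hall⟩
          refine ⟨fun v hv => ?_, hc⟩
          simp only [Finset.mem_filter, Finset.mem_univ, true_and]
          exact hall v hv
        · rintro ⟨hsub, hc⟩
          refine ⟨hc, fun v hv => ?_⟩
          have := hsub hv
          simp only [Finset.mem_filter, Finset.mem_univ, true_and] at this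
          exact this
      rw [← Finset.card_filter, hfilter, Finset.card_powersetCard, hfib]
    rw [Finset.sum_congr rfl inner, Finset.sum_const, smul_eq_mul]
  have outer : ∑ T' ∈ (Finset.univ : Finset (Fin n)).powersetCard T.card,
      ((colorings n s c).filter fun f => ∀ v ∈ T', f v = i).card
      = ((colorings n s c).filter fun f => ∀ v ∈ T, f v = i).card * n.choose T.card := by
    have : ∀ T' ∈ (Finset.univ : Finset (Fin n)).powersetCard T.card,
        ((colorings n s c).filter fun f => ∀ v ∈ T', f v = i).card
          = ((colorings n s c).filter fun f => ∀ v ∈ T, f v = i).card := by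
      intro T' hT'
      rw [Finset.mem_powersetCard] at hT'
      exact (count_invariant T T' hT'.2.symm).symm
    rw [Finset.sum_congr rfl this, Finset.sum_const, smul_eq_mul,
      Finset.card_powersetCard, Finset.card_univ, Fintype.card_fin, Nat.mul_comm]
  rw [← outer, key]

lemma colorings_nonempty {n s : ℕ} {c : Fin s → ℕ} (hsum : ∑ j, c j = n) :
    (colorings n s c).Nonempty := by
  classical
  have hcard : Fintype.card (Σ j : Fin s, Fin (c j)) = Fintype.card (Fin n) := by
    simp [hsum]
  let e : (Σ j : Fin s, Fin (c j)) ≃ Fin n := Fintype.equivOfCardEq hcard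
  refine ⟨fun v => (e.symm v).1, ?_⟩
  simp only [colorings, Finset.mem_filter, Finset.mem_univ, true_and]
  intro j
  have h1 : (Finset.univ.filter fun v => (e.symm v).1 = j).card
      = (Finset.univ.filter fun x : (Σ j' : Fin s, Fin (c j')) => x.1 = j).card :=
    card_filter_equiv e.symm (fun x => x.1 = j)
  have h2 : (Finset.univ.filter fun x : (Σ j' : Fin s, Fin (c j')) => x.1 = j)
      = Finset.univ.map ⟨fun y : Fin (c j) => ⟨j, y⟩, fun a b hab => by simpa using hab⟩ := by
    ext x
    simp only [Finset.mem_filter, Finset.mem_univ, true_and, Finset.mem_map,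
      Function.Embedding.coeFn_mk]
    constructor
    · obtain ⟨j', y⟩ := x
      rintro rfl
      exact ⟨y, rfl⟩
    · rintro ⟨y, rfl⟩; rfl
  rw [h1, h2, Finset.card_map, Finset.card_univ, Fintype.card_fin]

lemma count_div {n s : ℕ} {c : Fin s → ℕ} {i : Fin s} (hsum : ∑ j, c j = n)
    (T : Finset (Fin n)) :
    (((colorings n s c).filter fun f => ∀ v ∈ T, f v = i).card : ℝ)
      = ((colorings n s c).card : ℝ)
        * (((c i).descFactorial T.card : ℝ) / (n.descFactorial T.card : ℝ)) := by
  classical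
  have hk : T.card ≤ n := by
    have := Finset.card_le_card (Finset.subset_univ T)
    simpa using this
  have hnd : (n.descFactorial T.card : ℝ) ≠ 0 := by
    rw [Nat.cast_ne_zero]
    intro h
    rw [Nat.descFactorial_eq_zero_iff_lt] at h
    omega
  have hnat : ((colorings n s c).filter fun f => ∀ v ∈ T, f v = i).card
        * n.descFactorial T.card
      = (colorings n s c).card * (c i).descFactorial T.card := by
    rw [Nat.descFactorial_eq_factorial_mul_choose, Nat.descFactorial_eq_factorial_mul_choose]
    calc ((colorings n s c).filter fun f => ∀ v ∈ T, f v = i).card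
          * ((T.card).factorial * n.choose T.card)
        = (((colorings n s c).filter fun f => ∀ v ∈ T, f v = i).card * n.choose T.card)
          * (T.card).factorial := by ring
      _ = ((colorings n s c).card * (c i).choose T.card) * (T.card).factorial := by
          rw [count_mul_choose]
      _ = (colorings n s c).card * ((T.card).factorial * (c i).choose T.card) := by ring
  have hR : (((colorings n s c).filter fun f => ∀ v ∈ T, f v = i).card : ℝ)
        * (n.descFactorial T.card : ℝ)
      = ((colorings n s c).card : ℝ) * ((c i).descFactorial T.card : ℝ) := by
    exact_mod_cast congrArg (fun x : ℕ => (x : ℝ)) hnat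
  rw [← mul_div_assoc, eq_div_iff hnd]
  exact hR

lemma colVar_eq_sub (n s : ℕ) (c : Fin s → ℕ) (Y : (Fin n → Fin s) → ℝ)
    (h0 : ((colorings n s c).card : ℝ) ≠ 0) :
    colVar n s c Y = colExp n s c (fun f => (Y f) ^ 2) - (colExp n s c Y) ^ 2 := by
  have expand : (fun f => (Y f - colExp n s c Y) ^ 2)
      = fun f => (Y f) ^ 2 - 2 * colExp n s c Y * Y f + (colExp n s c Y) ^ 2 := by
    funext f; ring
  rw [colVar, expand]
  unfold colExp
  rw [Finset.sum_add_distrib, Finset.sum_sub_distrib, ← Finset.mul_sum, Finset.sum_const,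
    nsmul_eq_mul]
  field_simp
  ring

lemma card_endpoints {n : ℕ} {G : SimpleGraph (Fin n)} {e : Sym2 (Fin n)}
    (he : e ∈ G.edgeFinset) :
    (Finset.univ.filter fun v => v ∈ e).card = 2 := by
  classical
  induction e using Sym2.ind with
  | _ a b =>
    have hab : a ≠ b := by
      rw [SimpleGraph.mem_edgeFinset, SimpleGraph.mem_edgeSet] at he
      exact G.ne_of_adj he
    have : (Finset.univ.filter fun v => v ∈ (s(a, b) : Sym2 (Fin n))) = {a, b} := by
      ext v
      simp [Sym2.mem_iff]
    rw [this, Finset.card_insert_of_notMem (by simp [hab]), Finset.card_singleton]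

lemma card_inter_le_one {n : ℕ} {e e' : Sym2 (Fin n)} (hne : e ≠ e') (hd : ¬ e.IsDiag) :
    (Finset.univ.filter fun v => v ∈ e ∧ v ∈ e').card ≤ 1 := by
  classical
  rw [Finset.card_le_one]
  intro a ha b hb
  by_contra hab
  simp only [Finset.mem_filter, Finset.mem_univ, true_and] at ha hb
  have he : e = s(a, b) := ((Sym2.mem_and_mem_iff hab).mp ⟨ha.1, hb.1⟩)
  have he' : e' = s(a, b) := ((Sym2.mem_and_mem_iff hab).mp ⟨ha.2, hb.2⟩)
  exact hne (he.trans he'.symm)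

lemma card_union_add_inter {n : ℕ} {G : SimpleGraph (Fin n)} {e e' : Sym2 (Fin n)}
    (he : e ∈ G.edgeFinset) (he' : e' ∈ G.edgeFinset) :
    (Finset.univ.filter fun v => v ∈ e ∨ v ∈ e').card
      + (Finset.univ.filter fun v => v ∈ e ∧ v ∈ e').card = 4 := by
  classical
  have h := Finset.card_union_add_card_inter (Finset.univ.filter fun v => v ∈ e)
    (Finset.univ.filter fun v => v ∈ e')
  rw [← Finset.filter_or, ← Finset.filter_and] at h
  rw [h, card_endpoints he, card_endpoints he']

lemma sigma2_as_pairs {n : ℕ} (G : SimpleGraph (Fin n)) :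
    sigma2 G = ∑ p ∈ G.edgeFinset ×ˢ G.edgeFinset,
      (Finset.univ.filter fun v => v ∈ p.1 ∧ v ∈ p.2).card := by
  classical
  have hdeg : ∀ v : Fin n, (G.neighborSet v).ncard
      = (G.edgeFinset.filter fun e => v ∈ e).card := by
    intro v
    rw [Set.ncard_eq_toFinset_card', ← SimpleGraph.neighborFinset_def,
      SimpleGraph.card_neighborFinset_eq_degree, ← SimpleGraph.card_incidenceFinset_eq_degree,
      SimpleGraph.incidenceFinset_eq_filter]
  unfold sigma2
  simp_rw [hdeg, Finset.card_filter, sq, Finset.sum_mul_sum]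
  rw [Finset.sum_product]
  rw [Finset.sum_comm]
  apply Finset.sum_congr rfl
  intro e _
  rw [Finset.sum_comm]
  apply Finset.sum_congr rfl
  intro e' _
  apply Finset.sum_congr rfl
  intro v _
  by_cases h1 : v ∈ e <;> by_cases h2 : v ∈ e' <;> simp [h1, h2]

lemma count_div_pred {n s : ℕ} {c : Fin s → ℕ} {i : Fin s} (hsum : ∑ j, c j = n)
    (p : Fin n → Prop)
    {instf : DecidablePred fun f : Fin n → Fin s => ∀ v, p v → f v = i}
    {instp : DecidablePred p} :
    ((@Finset.filter _ (fun f => ∀ v, p v → f v = i) instf (colorings n s c)).card : ℝ)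
      = ((colorings n s c).card : ℝ)
        * (((c i).descFactorial (@Finset.filter _ p instp Finset.univ).card : ℝ)
            / (n.descFactorial (@Finset.filter _ p instp Finset.univ).card : ℝ)) := by
  classical
  have hfc : (@Finset.filter _ (fun f => ∀ v, p v → f v = i) instf (colorings n s c))
      = ((colorings n s c).filter fun f => ∀ v ∈ @Finset.filter _ p instp Finset.univ,
          f v = i) := by
    ext f
    simp only [Finset.mem_filter]
    refine and_congr_right fun _ => ?_
    constructor
    · intro h v hv; exact h v hv.2
    · intro h v hv; exact h v ⟨Finset.mem_univ v, hv⟩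
  rw [hfc, count_div hsum]

lemma key34 {n cc : ℕ} (hlt : cc < n) :
    (cc.descFactorial 3 : ℝ) * ((n : ℝ) - (cc : ℝ)) / (n.descFactorial 4 : ℝ)
      = (cc.descFactorial 3 : ℝ) / (n.descFactorial 3 : ℝ)
        - (cc.descFactorial 4 : ℝ) / (n.descFactorial 4 : ℝ) := by
  rcases lt_or_ge cc 3 with h3 | h3
  · have h1 : cc.descFactorial 3 = 0 := Nat.descFactorial_eq_zero_iff_lt.mpr h3
    have h2 : cc.descFactorial 4 = 0 := Nat.descFactorial_eq_zero_iff_lt.mpr (by omega)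
    rw [h1, h2]
    norm_num
  · have hn4 : 4 ≤ n := by omega
    have hd3 : (n.descFactorial 3 : ℝ) ≠ 0 := by
      rw [Nat.cast_ne_zero]
      intro h; rw [Nat.descFactorial_eq_zero_iff_lt] at h; omega
    have hn3 : ((n : ℝ) - 3) ≠ 0 := by
      have : (3:ℝ) < (n:ℝ) := by exact_mod_cast (by omega : 3 < n)
      linarith
    have hcd4 : (cc.descFactorial 4 : ℝ) = ((cc : ℝ) - 3) * (cc.descFactorial 3 : ℝ) := by
      rw [show (4 : ℕ) = 3 + 1 from rfl, Nat.descFactorial_succ]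
      push_cast [Nat.cast_sub (by omega : 3 ≤ cc)]
      ring
    have hnd4 : (n.descFactorial 4 : ℝ) = ((n : ℝ) - 3) * (n.descFactorial 3 : ℝ) := by
      rw [show (4 : ℕ) = 3 + 1 from rfl, Nat.descFactorial_succ]
      push_cast [Nat.cast_sub (by omega : 3 ≤ n)]
      ring
    have aux : ∀ X Y a b : ℝ, Y ≠ 0 → b - 3 ≠ 0 →
        X * (b - a) / ((b - 3) * Y) = X / Y - (a - 3) * X / ((b - 3) * Y) := by
      intro X Y a b hY hb
      field_simp
      ring
    rw [hcd4, hnd4]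
    exact aux _ _ _ _ hd3 hn3

set_option maxHeartbeats 2000000 in
/-- The variance of `M_i(G)` under a uniformly random `c`-coloring equals
`(c_i^{(3)}(n-c_i)/n^{(4)}) Σ₂(G) - ([c_i^{(2)}/n^{(2)}]² - c_i^{(4)}/n^{(4)}) m²
  + (c_i^{(2)}/n^{(2)} - 2 c_i^{(3)}/n^{(3)} + c_i^{(4)}/n^{(4)}) m`. -/
theorem stmt7 (n s : ℕ) (hs2 : 2 ≤ s) (hsn : s ≤ n)
    (c : Fin s → ℕ) (hpos : ∀ i, 0 < c i) (hsum : ∑ i, c i = n)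
    (G : SimpleGraph (Fin n)) (m : ℕ) (hm : m = edgeCount G) (i : Fin s) :
    colVar n s c (fun f => (monoEdges G i f : ℝ))
      = (((c i).descFactorial 3 : ℝ) * ((n : ℝ) - (c i : ℝ)) / (n.descFactorial 4 : ℝ))
            * (sigma2 G : ℝ)
        - ((((c i).descFactorial 2 : ℝ) / (n.descFactorial 2 : ℝ)) ^ 2
            - ((c i).descFactorial 4 : ℝ) / (n.descFactorial 4 : ℝ)) * (m : ℝ) ^ 2
        + (((c i).descFactorial 2 : ℝ) / (n.descFactorial 2 : ℝ)
            - 2 * ((c i).descFactorial 3 : ℝ) / (n.descFactorial 3 : ℝ)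
            + ((c i).descFactorial 4 : ℝ) / (n.descFactorial 4 : ℝ)) * (m : ℝ) := by
  classical
  have hne : (colorings n s c).Nonempty := colorings_nonempty hsum
  have hN0 : ((colorings n s c).card : ℝ) ≠ 0 :=
    Nat.cast_ne_zero.mpr (Finset.card_pos.mpr hne).ne'
  -- c i < n
  have hlt : c i < n := by
    have hnt : Nontrivial (Fin s) := by
      refine Fin.nontrivial_iff_two_le.mpr hs2
    obtain ⟨j, hj⟩ := exists_ne i
    have hj' : j ∈ Finset.univ.erase i := Finset.mem_erase.mpr ⟨hj, Finset.mem_univ j⟩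
    have h1 : c j ≤ ∑ k ∈ Finset.univ.erase i, c k :=
      Finset.single_le_sum (fun k _ => Nat.zero_le _) hj'
    have h2 : c i + ∑ k ∈ Finset.univ.erase i, c k = n := by
      rw [Finset.add_sum_erase _ c (Finset.mem_univ i), hsum]
    have := hpos j
    omega
  set q : ℕ → ℝ := fun k => ((c i).descFactorial k : ℝ) / (n.descFactorial k : ℝ) with hqdef
  have hmE : m = G.edgeFinset.card := by
    rw [hm]; unfold edgeCount
    rw [← SimpleGraph.coe_edgeFinset, Set.ncard_coe_finset]
  -- indicator representation of monoEdges
  have hmono : ∀ f : Fin n → Fin s, (monoEdges G i f : ℝ)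
      = ∑ e ∈ G.edgeFinset, (if ∀ v ∈ e, f v = i then (1:ℝ) else 0) := by
    intro f
    have hset : {e ∈ G.edgeSet | ∀ v ∈ e, f v = i}
        = ↑(G.edgeFinset.filter fun e => ∀ v ∈ e, f v = i) := by
      ext e
      simp [Set.mem_setOf_eq, SimpleGraph.mem_edgeFinset]
    unfold monoEdges
    rw [hset, Set.ncard_coe_finset, Finset.card_filter, Nat.cast_sum]
    apply Finset.sum_congr rfl
    intro e _
    split_ifs <;> simp
  -- expectation of M_i
  have hEY : colExp n s c (fun f => (monoEdges G i f : ℝ)) = (G.edgeFinset.card : ℝ) * q 2 := by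
    unfold colExp
    have hswap : ∑ f ∈ colorings n s c, (monoEdges G i f : ℝ)
        = ∑ e ∈ G.edgeFinset,
            (∑ f ∈ colorings n s c, if ∀ v ∈ e, f v = i then (1:ℝ) else 0) := by
      simp_rw [hmono]
      rw [Finset.sum_comm]
    have hcount : ∀ e ∈ G.edgeFinset,
        (∑ f ∈ colorings n s c, if ∀ v ∈ e, f v = i then (1:ℝ) else 0)
          = ((colorings n s c).card : ℝ) * q 2 := by
      intro e he
      rw [Finset.sum_boole]
      simp only [hqdef]
      rw [← card_endpoints he]
      exact count_div_pred hsum (fun v => v ∈ e)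
    rw [hswap, Finset.sum_congr rfl hcount, Finset.sum_const, nsmul_eq_mul]
    field_simp
  -- expectation of M_i^2
  have hEY2 : colExp n s c (fun f => (monoEdges G i f : ℝ) ^ 2)
      = ∑ p ∈ G.edgeFinset ×ˢ G.edgeFinset,
          q ((Finset.univ.filter fun v => v ∈ p.1 ∨ v ∈ p.2).card) := by
    unfold colExp
    have hsq : ∀ f : Fin n → Fin s, (monoEdges G i f : ℝ) ^ 2
        = ∑ p ∈ G.edgeFinset ×ˢ G.edgeFinset,
            (if (∀ v, (v ∈ p.1 ∨ v ∈ p.2) → f v = i) then (1:ℝ) else 0) := by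
      intro f
      rw [hmono, sq, Finset.sum_mul_sum]
      rw [Finset.sum_product]
      apply Finset.sum_congr rfl
      intro e _
      apply Finset.sum_congr rfl
      intro e' _
      have hQ : (∀ v, (v ∈ e ∨ v ∈ e') → f v = i)
          ↔ (∀ v ∈ e, f v = i) ∧ (∀ v ∈ e', f v = i) := by
        constructor
        · intro h; exact ⟨fun v hv => h v (Or.inl hv), fun v hv => h v (Or.inr hv)⟩
        · rintro ⟨ha, hb⟩ v hv
          rcases hv with h | h
          exacts [ha v h, hb v h]
      by_cases h1 : (∀ v ∈ e, f v = i) <;> by_cases h2 : (∀ v ∈ e', f v = i)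
      · rw [if_pos h1, if_pos h2, if_pos (hQ.mpr ⟨h1, h2⟩)]; norm_num
      · rw [if_pos h1, if_neg h2, if_neg (fun h => h2 (hQ.mp h).2)]; norm_num
      · rw [if_neg h1, if_pos h2, if_neg (fun h => h1 (hQ.mp h).1)]; norm_num
      · rw [if_neg h1, if_neg h2, if_neg (fun h => h1 (hQ.mp h).1)]; norm_num
    simp_rw [hsq]
    rw [Finset.sum_comm]
    have hcount : ∀ p ∈ G.edgeFinset ×ˢ G.edgeFinset,
        (∑ f ∈ colorings n s c, if (∀ v, (v ∈ p.1 ∨ v ∈ p.2) → f v = i) then (1:ℝ) else 0)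
          = ((colorings n s c).card : ℝ)
              * q ((Finset.univ.filter fun v => v ∈ p.1 ∨ v ∈ p.2).card) := by
      intro p _
      rw [Finset.sum_boole]
      simp only [hqdef]
      exact count_div_pred hsum (fun v => v ∈ p.1 ∨ v ∈ p.2)
    rw [Finset.sum_congr rfl hcount, ← Finset.mul_sum]
    field_simp
  -- the split of the pair sum
  set D := ((G.edgeFinset ×ˢ G.edgeFinset).filter fun p => p.1 = p.2) with hDdef
  set O := ((G.edgeFinset ×ˢ G.edgeFinset).filter fun p => ¬ p.1 = p.2) with hOdef
  set O1 := (O.filter fun p => (Finset.univ.filter fun v => v ∈ p.1 ∧ v ∈ p.2).card = 1)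
    with hO1def
  set O0 := (O.filter fun p => ¬ (Finset.univ.filter fun v => v ∈ p.1 ∧ v ∈ p.2).card = 1)
    with hO0def
  have hDcard : D.card = G.edgeFinset.card := by
    rw [hDdef]
    have himg : ((G.edgeFinset ×ˢ G.edgeFinset).filter fun p => p.1 = p.2)
        = G.edgeFinset.image (fun e => (e, e)) := by
      ext p
      simp only [Finset.mem_filter, Finset.mem_product, Finset.mem_image]
      constructor
      · rintro ⟨⟨ha, hb⟩, hab⟩
        exact ⟨p.1, ha, by rw [Prod.ext_iff]; exact ⟨rfl, hab⟩⟩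
      · rintro ⟨e, he, rfl⟩
        exact ⟨⟨he, he⟩, rfl⟩
    rw [himg]
    apply Finset.card_image_of_injective
    intro a b hab
    simpa using congrArg Prod.fst hab
  have hUdiag : ∀ p ∈ D, (Finset.univ.filter fun v => v ∈ p.1 ∨ v ∈ p.2).card = 2 := by
    intro p hp
    rw [hDdef, Finset.mem_filter, Finset.mem_product] at hp
    obtain ⟨⟨h1, _⟩, h3⟩ := hp
    have hcongr : (Finset.univ.filter fun v => v ∈ p.1 ∨ v ∈ p.2)
        = (Finset.univ.filter fun v => v ∈ p.1) := by
      apply Finset.filter_congr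
      intro v _
      rw [← h3]
      simp
    rw [hcongr]
    exact card_endpoints h1
  have hIdiag : ∀ p ∈ D, (Finset.univ.filter fun v => v ∈ p.1 ∧ v ∈ p.2).card = 2 := by
    intro p hp
    rw [hDdef, Finset.mem_filter, Finset.mem_product] at hp
    obtain ⟨⟨h1, _⟩, h3⟩ := hp
    have hcongr : (Finset.univ.filter fun v => v ∈ p.1 ∧ v ∈ p.2)
        = (Finset.univ.filter fun v => v ∈ p.1) := by
      apply Finset.filter_congr
      intro v _
      rw [← h3]
      simp
    rw [hcongr]
    exact card_endpoints h1
  have hIO : ∀ p ∈ O, (Finset.univ.filter fun v => v ∈ p.1 ∧ v ∈ p.2).card ≤ 1 := by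
    intro p hp
    rw [hOdef, Finset.mem_filter] at hp
    exact card_inter_le_one hp.2 (by
      have := (Finset.mem_product.mp hp.1).1
      rw [SimpleGraph.mem_edgeFinset] at this
      exact SimpleGraph.not_isDiag_of_mem_edgeSet G this)
  have hUI : ∀ p ∈ G.edgeFinset ×ˢ G.edgeFinset,
      (Finset.univ.filter fun v => v ∈ p.1 ∨ v ∈ p.2).card
        + (Finset.univ.filter fun v => v ∈ p.1 ∧ v ∈ p.2).card = 4 := by
    intro p hp
    rw [Finset.mem_product] at hp
    exact card_union_add_inter hp.1 hp.2
  have hO1U : ∀ p ∈ O1, (Finset.univ.filter fun v => v ∈ p.1 ∨ v ∈ p.2).card = 3 := by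
    intro p hp
    rw [hO1def, Finset.mem_filter] at hp
    have hmem : p ∈ G.edgeFinset ×ˢ G.edgeFinset := by
      have := hp.1; rw [hOdef, Finset.mem_filter] at this; exact this.1
    have := hUI p hmem
    omega
  have hO0U : ∀ p ∈ O0, (Finset.univ.filter fun v => v ∈ p.1 ∨ v ∈ p.2).card = 4 := by
    intro p hp
    rw [hO0def, Finset.mem_filter] at hp
    have hmem : p ∈ G.edgeFinset ×ˢ G.edgeFinset := by
      have := hp.1; rw [hOdef, Finset.mem_filter] at this; exact this.1
    have h1 := hUI p hmem
    have h2 := hIO p hp.1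
    omega
  have hO0I : ∀ p ∈ O0, (Finset.univ.filter fun v => v ∈ p.1 ∧ v ∈ p.2).card = 0 := by
    intro p hp
    rw [hO0def, Finset.mem_filter] at hp
    have h2 := hIO p hp.1
    omega
  -- the pair sum
  have hpairsum : ∑ p ∈ G.edgeFinset ×ˢ G.edgeFinset,
      q ((Finset.univ.filter fun v => v ∈ p.1 ∨ v ∈ p.2).card)
      = (G.edgeFinset.card : ℝ) * q 2 + ((O1.card : ℝ) * q 3 + (O0.card : ℝ) * q 4) := by
    rw [← Finset.sum_filter_add_sum_filter_not (G.edgeFinset ×ˢ G.edgeFinset)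
      (fun p => p.1 = p.2)]
    congr 1
    · rw [Finset.sum_congr rfl (fun p hp => by rw [hUdiag p hp]), Finset.sum_const, hDcard,
        nsmul_eq_mul]
    · rw [← Finset.sum_filter_add_sum_filter_not O
        (fun p => (Finset.univ.filter fun v => v ∈ p.1 ∧ v ∈ p.2).card = 1)]
      congr 1
      · rw [Finset.sum_congr rfl (fun p hp => by rw [hO1U p hp]), Finset.sum_const,
          nsmul_eq_mul]
      · rw [Finset.sum_congr rfl (fun p hp => by rw [hO0U p hp]), Finset.sum_const,
          nsmul_eq_mul]
  -- sigma2 identity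
  have hsig : sigma2 G = 2 * G.edgeFinset.card + O1.card := by
    have t1 := Finset.sum_filter_add_sum_filter_not (G.edgeFinset ×ˢ G.edgeFinset)
      (fun p => p.1 = p.2)
      (fun p => (Finset.univ.filter fun v => v ∈ p.1 ∧ v ∈ p.2).card)
    rw [← hDdef, ← hOdef] at t1
    have t2 := Finset.sum_filter_add_sum_filter_not O
      (fun p => (Finset.univ.filter fun v => v ∈ p.1 ∧ v ∈ p.2).card = 1)
      (fun p => (Finset.univ.filter fun v => v ∈ p.1 ∧ v ∈ p.2).card)
    rw [← hO1def, ← hO0def] at t2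
    have eD : ∑ p ∈ D, (Finset.univ.filter fun v => v ∈ p.1 ∧ v ∈ p.2).card
        = 2 * D.card := by
      rw [Finset.card_eq_sum_ones D, Finset.mul_sum]
      exact Finset.sum_congr rfl (fun p hp => by rw [hIdiag p hp]; ring)
    have e1 : ∑ p ∈ O1, (Finset.univ.filter fun v => v ∈ p.1 ∧ v ∈ p.2).card
        = O1.card := by
      rw [Finset.card_eq_sum_ones O1]
      refine Finset.sum_congr rfl (fun p hp => ?_)
      have hp' := hp
      rw [hO1def] at hp'
      exact (Finset.mem_filter.mp hp').2
    have e0 : ∑ p ∈ O0, (Finset.univ.filter fun v => v ∈ p.1 ∧ v ∈ p.2).card = 0 :=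
      Finset.sum_eq_zero hO0I
    rw [sigma2_as_pairs]
    omega
  -- cardinality constraint
  have hcards : (G.edgeFinset.card : ℝ) * (G.edgeFinset.card : ℝ)
      = (G.edgeFinset.card : ℝ) + ((O1.card : ℝ) + (O0.card : ℝ)) := by
    have h1 : D.card + O.card = G.edgeFinset.card * G.edgeFinset.card := by
      rw [hDdef, hOdef, Finset.card_filter_add_card_filter_not, Finset.card_product]
    have h2 : O1.card + O0.card = O.card := by
      rw [hO1def, hO0def, Finset.card_filter_add_card_filter_not]
    have hNat : G.edgeFinset.card * G.edgeFinset.card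
        = G.edgeFinset.card + (O1.card + O0.card) := by
      rw [← h1, hDcard, ← h2]
    exact_mod_cast hNat
  -- put everything together
  rw [colVar_eq_sub n s c _ hN0]
  have hbeta : colExp n s c (fun f => ((fun f => (monoEdges G i f : ℝ)) f) ^ 2)
      = colExp n s c (fun f => (monoEdges G i f : ℝ) ^ 2) := rfl
  rw [hbeta, hEY2, hEY, hpairsum]
  rw [key34 hlt]
  have hmR : (m : ℝ) = (G.edgeFinset.card : ℝ) := by exact_mod_cast hmE
  have hsigR : (sigma2 G : ℝ) = 2 * (G.edgeFinset.card : ℝ) + (O1.card : ℝ) := by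
    exact_mod_cast hsig
  rw [hmR, hsigR]
  simp only [hqdef]
  push_cast
  ring_nf
  linear_combination (-(((c i).descFactorial 4 : ℝ) / (n.descFactorial 4 : ℝ))) * hcards
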